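/- Let x = exp(a F_{0,d} + b F_{1,d+1}) ∈ SO(p+1,q+1)₀ (q ≥ 1), a one-parameter-type element whose matrix has corner entries A = cosh(a), I = cosh(b), C = G = 0 (in the 1+d+1 block decomposition). Then the cross ratios are u = 4/(cosh(a)−cosh(b))² = csch²((a+b)/2)·csch²((a−b)/2) and v = (cosh(a)+cosh(b))²/(cosh(a)−cosh(b))² = coth²((a+b)/2)·coth²((a−b)/2), whenever a ± b ≠ 0. -/

import Mathlib

open Matrix

/-- Sign of the `μ`-th basis vector for the metric `η = diag(1^{p+1}, (−1)^{q+1})`. -/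
def etaSign (p : ℕ) {n : ℕ} (μ : Fin n) : ℝ := if (μ : ℕ) < p + 1 then 1 else -1

/-- Metric coefficients `η_{μν} = δ_{μν}·etaSign μ`. -/
def etaDelta (p : ℕ) {n : ℕ} (μ ν : Fin n) : ℝ := if μ = ν then etaSign p μ else 0

/-- The matrix `E_{μν}` with entries `(E_{μν})^σ_ρ = δ^σ_μ η_{νρ}`. -/
def Emat (p q : ℕ) (μ ν : Fin (p + 1 + (q + 1))) :
    Matrix (Fin (p + 1 + (q + 1))) (Fin (p + 1 + (q + 1))) ℝ :=
  fun σ ρ => (if σ = μ then (1 : ℝ) else 0) * etaDelta p ν ρ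

/-- The standard generators `F_{μν} = E_{μν} − E_{νμ}` of `𝔰𝔬(p+1,q+1)`. -/
def Fmat (p q : ℕ) (μ ν : Fin (p + 1 + (q + 1))) :
    Matrix (Fin (p + 1 + (q + 1))) (Fin (p + 1 + (q + 1))) ℝ :=
  Emat p q μ ν - Emat p q ν μ


section AuxCR

variable {N : Type*} [Fintype N] [DecidableEq N]

lemma sbm_mul_of_ne {j k : N} (h : j ≠ k) (i l : N) (c d : ℝ) :
    Matrix.single i j c * Matrix.single k l d = 0 :=
  Matrix.single_mul_single_of_ne (c := c) i j k h d

/-- A matrix supported on the 2×2 block with rows/columns `i, j`. -/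
def fourB (i j : N) (w x y z : ℝ) : Matrix N N ℝ :=
  Matrix.single i i w + Matrix.single i j x + Matrix.single j i y + Matrix.single j j z

set_option linter.unusedSectionVars false

lemma fourB_mul_fourB {i j : N} (h : i ≠ j) (w x y z w' x' y' z' : ℝ) :
    fourB i j w x y z * fourB i j w' x' y' z' =
      fourB i j (w*w'+x*y') (w*x'+x*z') (y*w'+z*y') (y*x'+z*z') := by
  simp only [fourB, add_mul, mul_add, single_mul_single_same,
    sbm_mul_of_ne h, sbm_mul_of_ne h.symm, add_zero, zero_add, Matrix.single_add]
  abel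

lemma fourB_mul_fourB_disjoint {i j k l : N} (hik : i ≠ k) (hil : i ≠ l) (hjk : j ≠ k)
    (hjl : j ≠ l) (w x y z w' x' y' z' : ℝ) :
    fourB i j w x y z * fourB k l w' x' y' z' = 0 := by
  simp only [fourB, add_mul, mul_add, sbm_mul_of_ne hik, sbm_mul_of_ne hil,
    sbm_mul_of_ne hjk, sbm_mul_of_ne hjl, add_zero, zero_add]

lemma smul_fourB (c : ℝ) (i j : N) (w x y z : ℝ) :
    c • fourB i j w x y z = fourB i j (c*w) (c*x) (c*y) (c*z) := by
  simp [fourB, smul_add, smul_eq_mul]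

lemma fourB_add_fourB (i j : N) (w x y z w' x' y' z' : ℝ) :
    fourB i j w x y z + fourB i j w' x' y' z' = fourB i j (w+w') (x+x') (y+y') (z+z') := by
  simp only [fourB, Matrix.single_add]; abel

lemma fourB_congr (i j : N) {w x y z w' x' y' z' : ℝ} (hw : w = w') (hx : x = x')
    (hy : y = y') (hz : z = z') : fourB i j w x y z = fourB i j w' x' y' z' := by
  rw [hw, hx, hy, hz]

lemma fourB_zero (i j : N) : fourB i j 0 0 0 0 = 0 := by simp [fourB]

lemma fourB_apply_ii {i j : N} (h : i ≠ j) (w x y z : ℝ) : fourB i j w x y z i i = w := by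
  simp [fourB, Matrix.add_apply, h, h.symm]

lemma fourB_apply_jj {i j : N} (h : i ≠ j) (w x y z : ℝ) : fourB i j w x y z j j = z := by
  simp [fourB, Matrix.add_apply, h, h.symm]

lemma fourB_apply_row {i j σ ρ : N} (h1 : σ ≠ i) (h2 : σ ≠ j) (w x y z : ℝ) :
    fourB i j w x y z σ ρ = 0 := by
  simp [fourB, Matrix.add_apply, h1.symm, h2.symm]

lemma fourB_apply_col {i j σ ρ : N} (h1 : ρ ≠ i) (h2 : ρ ≠ j) (w x y z : ℝ) :
    fourB i j w x y z σ ρ = 0 := by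
  simp [fourB, Matrix.add_apply, h1.symm, h2.symm]

lemma commute_of_mul_eq_zero {A B : Matrix N N ℝ} (h1 : A * B = 0) (h2 : B * A = 0) :
    Commute A B := by
  unfold Commute SemiconjBy; rw [h1, h2]

lemma scalar_exp_sub_one (c : ℝ) :
    Real.exp c - 1 = ∑' k : ℕ, (((k+1).factorial : ℝ))⁻¹ * c ^ (k+1) := by
  have h1 : Real.exp c = ∑' n : ℕ, ((n.factorial : ℝ))⁻¹ • c ^ n := by
    rw [Real.exp_eq_exp_ℝ, NormedSpace.exp_eq_tsum (𝕂 := ℝ)]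
  have hs := NormedSpace.expSeries_summable' (𝕂 := ℝ) (x := c)
  rw [h1, Summable.tsum_eq_zero_add hs]
  simp [smul_eq_mul]

lemma exp_smul_idem (Q : Matrix N N ℝ) (hQ : Q * Q = Q) (c : ℝ) :
    NormedSpace.exp (c • Q) = 1 + (Real.exp c - 1) • Q := by
  letI : SeminormedRing (Matrix N N ℝ) := Matrix.linftyOpSemiNormedRing
  letI : NormedRing (Matrix N N ℝ) := Matrix.linftyOpNormedRing
  letI : NormedAlgebra ℝ (Matrix N N ℝ) := Matrix.linftyOpNormedAlgebra
  have hpow : ∀ k : ℕ, (c • Q) ^ (k + 1) = c ^ (k + 1) • Q := by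
    intro k
    induction k with
    | zero => simp
    | succ k ih => rw [pow_succ, ih, smul_mul_smul_comm, hQ, ← pow_succ]
  have hsc : Summable (fun k : ℕ => (((k+1).factorial : ℝ))⁻¹ * c ^ (k+1)) := by
    have hs := NormedSpace.expSeries_summable' (𝕂 := ℝ) (x := c)
    have := hs.comp_injective (add_left_injective 1)
    exact this.congr fun k => by simp [Function.comp, smul_eq_mul]
  rw [NormedSpace.exp_eq_tsum (𝕂 := ℝ)]
  show (∑' n : ℕ, ((n.factorial : ℝ))⁻¹ • (c • Q) ^ n) = _
  rw [Summable.tsum_eq_zero_add (by exact NormedSpace.expSeries_summable' (𝕂 := ℝ) (c • Q))]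
  have hterm : ∀ k : ℕ, ((((k+1).factorial : ℝ))⁻¹ • (c • Q) ^ (k+1))
      = ((((k+1).factorial : ℝ))⁻¹ * c ^ (k+1)) • Q := by
    intro k; rw [hpow, smul_smul]
  simp only [pow_zero, Nat.factorial_zero, Nat.cast_one, inv_one, one_smul]
  rw [tsum_congr hterm, Summable.tsum_smul_const hsc, ← scalar_exp_sub_one]

/-- exp of `c • fourB i j 0 (-1) (-1) 0`. -/
lemma exp_smul_fourF {i j : N} (h : i ≠ j) (c : ℝ) :
    NormedSpace.exp (fourB i j 0 (-c) (-c) 0) =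
      1 + fourB i j (Real.cosh c - 1) (-Real.sinh c) (-Real.sinh c) (Real.cosh c - 1) := by
  set Qp : Matrix N N ℝ := fourB i j (1/2) (-(1/2)) (-(1/2)) (1/2) with hQp
  set Qm : Matrix N N ℝ := fourB i j (1/2) (1/2) (1/2) (1/2) with hQm
  have hQpQp : Qp * Qp = Qp := by
    rw [hQp, fourB_mul_fourB h]; exact fourB_congr _ _ (by norm_num) (by norm_num) (by norm_num) (by norm_num)
  have hQmQm : Qm * Qm = Qm := by
    rw [hQm, fourB_mul_fourB h]; exact fourB_congr _ _ (by norm_num) (by norm_num) (by norm_num) (by norm_num)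
  have hQpQm : Qp * Qm = 0 := by
    rw [hQp, hQm, fourB_mul_fourB h]
    rw [fourB_congr i j (w' := 0) (x' := 0) (y' := 0) (z' := 0) (by norm_num) (by norm_num) (by norm_num) (by norm_num)]
    exact fourB_zero i j
  have hQmQp : Qm * Qp = 0 := by
    rw [hQp, hQm, fourB_mul_fourB h]
    rw [fourB_congr i j (w' := 0) (x' := 0) (y' := 0) (z' := 0) (by norm_num) (by norm_num) (by norm_num) (by norm_num)]
    exact fourB_zero i j
  have hdec : fourB i j 0 (-c) (-c) 0 = c • Qp + (-c) • Qm := by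
    rw [hQp, hQm, smul_fourB, smul_fourB, fourB_add_fourB]
    exact fourB_congr _ _ (by ring) (by ring) (by ring) (by ring)
  have hcomm : Commute (c • Qp) ((-c) • Qm) := by
    apply commute_of_mul_eq_zero
    · rw [smul_mul_smul_comm, hQpQm, smul_zero]
    · rw [smul_mul_smul_comm, hQmQp, smul_zero]
  rw [hdec, Matrix.exp_add_of_commute _ _ hcomm, exp_smul_idem _ hQpQp, exp_smul_idem _ hQmQm]
  rw [add_mul, mul_add, mul_add, one_mul, mul_one, smul_mul_smul_comm, hQpQm, smul_zero, add_zero]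
  rw [hQp, hQm, smul_fourB, smul_fourB, one_mul, add_assoc, fourB_add_fourB]
  congr 1
  have hc : Real.cosh c = (Real.exp c + Real.exp (-c)) / 2 := Real.cosh_eq c
  have hs : Real.sinh c = (Real.exp c - Real.exp (-c)) / 2 := Real.sinh_eq c
  exact fourB_congr _ _ (by rw [hc]; ring) (by rw [hs]; ring) (by rw [hs]; ring) (by rw [hc]; ring)

end AuxCR

lemma Emat_eq (p q : ℕ) (μ ν : Fin (p + 1 + (q + 1))) :
    Emat p q μ ν = Matrix.single μ ν (etaSign p ν) := by
  ext σ ρ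
  simp only [Emat, etaDelta, Matrix.single, Matrix.of_apply]
  by_cases h1 : σ = μ <;> by_cases h2 : ν = ρ <;>
    simp [h1, h2, eq_comm (a := μ) (b := σ), eq_comm (a := ν) (b := ρ)]

lemma Fmat_eq (p q : ℕ) (μ ν : Fin (p + 1 + (q + 1))) (hμ : (μ:ℕ) < p + 1)
    (hν : ¬((ν:ℕ) < p + 1)) :
    Fmat p q μ ν = fourB μ ν 0 (-1) (-1) 0 := by
  rw [Fmat, Emat_eq, Emat_eq]
  have h1 : etaSign p ν = -1 := if_neg hν
  have h2 : etaSign p μ = 1 := if_pos hμ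
  rw [h1, h2]
  ext σ ρ
  simp only [fourB, Matrix.sub_apply, Matrix.add_apply, Matrix.single, Matrix.of_apply]
  split_ifs <;> ring

lemma cosh_sub_cosh' (a b : ℝ) :
    Real.cosh a - Real.cosh b =
      2 * Real.sinh ((a + b) / 2) * Real.sinh ((a - b) / 2) := by
  have ha : a = (a + b) / 2 + (a - b) / 2 := by ring
  have hb : b = (a + b) / 2 - (a - b) / 2 := by ring
  rw [ha, hb, Real.cosh_add, Real.cosh_sub]
  ring

lemma cosh_add_cosh' (a b : ℝ) :
    Real.cosh a + Real.cosh b =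
      2 * Real.cosh ((a + b) / 2) * Real.cosh ((a - b) / 2) := by
  have ha : a = (a + b) / 2 + (a - b) / 2 := by ring
  have hb : b = (a + b) / 2 - (a - b) / 2 := by ring
  rw [ha, hb, Real.cosh_add, Real.cosh_sub]
  ring

/-- Let `x = exp(a F_{0,d} + b F_{1,d+1}) ∈ SO(p+1,q+1)₀` with `q ≥ 1`
(and `p ≥ q`, `d = p+q > 2`). In the `1+d+1` block decomposition, the corner entries are
`A = cosh a`, `I = cosh b`, `C = G = 0`, and whenever `a ± b ≠ 0` the cross ratios
`u = 4/((A−I)² − (C−G)²)` and `v = ((A+I)² − (C+G)²)/((A−I)² − (C−G)²)` satisfy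
`u = 4/(cosh a − cosh b)² = csch²((a+b)/2)·csch²((a−b)/2)` and
`v = (cosh a + cosh b)²/(cosh a − cosh b)² = coth²((a+b)/2)·coth²((a−b)/2)`. -/
theorem cartan_subset_cross_ratios (p q : ℕ) (hq : 1 ≤ q) (hqp : q ≤ p)
    (hd : 2 < p + q) (a b : ℝ) :
    ∀ x : Matrix (Fin (p + 1 + (q + 1))) (Fin (p + 1 + (q + 1))) ℝ,
      x = NormedSpace.exp
        (a • Fmat p q ⟨0, by omega⟩ ⟨p + q, by omega⟩ +
         b • Fmat p q ⟨1, by omega⟩ ⟨p + q + 1, by omega⟩) →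
      x ⟨0, by omega⟩ ⟨0, by omega⟩ = Real.cosh a ∧
      x ⟨p + q + 1, by omega⟩ ⟨p + q + 1, by omega⟩ = Real.cosh b ∧
      x ⟨0, by omega⟩ ⟨p + q + 1, by omega⟩ = 0 ∧
      x ⟨p + q + 1, by omega⟩ ⟨0, by omega⟩ = 0 ∧
      (a + b ≠ 0 → a - b ≠ 0 →
        (4 / ((x ⟨0, by omega⟩ ⟨0, by omega⟩ - x ⟨p + q + 1, by omega⟩ ⟨p + q + 1, by omega⟩) ^ 2
              - (x ⟨0, by omega⟩ ⟨p + q + 1, by omega⟩ - x ⟨p + q + 1, by omega⟩ ⟨0, by omega⟩) ^ 2)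
            = 4 / (Real.cosh a - Real.cosh b) ^ 2 ∧
          4 / (Real.cosh a - Real.cosh b) ^ 2
            = (Real.sinh ((a + b) / 2))⁻¹ ^ 2 * (Real.sinh ((a - b) / 2))⁻¹ ^ 2) ∧
        (((x ⟨0, by omega⟩ ⟨0, by omega⟩ + x ⟨p + q + 1, by omega⟩ ⟨p + q + 1, by omega⟩) ^ 2
              - (x ⟨0, by omega⟩ ⟨p + q + 1, by omega⟩ + x ⟨p + q + 1, by omega⟩ ⟨0, by omega⟩) ^ 2)
            / ((x ⟨0, by omega⟩ ⟨0, by omega⟩ - x ⟨p + q + 1, by omega⟩ ⟨p + q + 1, by omega⟩) ^ 2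
              - (x ⟨0, by omega⟩ ⟨p + q + 1, by omega⟩ - x ⟨p + q + 1, by omega⟩ ⟨0, by omega⟩) ^ 2)
            = (Real.cosh a + Real.cosh b) ^ 2 / (Real.cosh a - Real.cosh b) ^ 2 ∧
          (Real.cosh a + Real.cosh b) ^ 2 / (Real.cosh a - Real.cosh b) ^ 2
            = (Real.cosh ((a + b) / 2) / Real.sinh ((a + b) / 2)) ^ 2 *
                (Real.cosh ((a - b) / 2) / Real.sinh ((a - b) / 2)) ^ 2)) := by
  intro x hx
  have h01 : (⟨0, by omega⟩ : Fin (p + 1 + (q + 1))) ≠ ⟨1, by omega⟩ :=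
    Fin.ne_of_val_ne (show (0:ℕ) ≠ 1 by omega)
  have h0d : (⟨0, by omega⟩ : Fin (p + 1 + (q + 1))) ≠ ⟨p + q, by omega⟩ :=
    Fin.ne_of_val_ne (show (0:ℕ) ≠ p + q by omega)
  have h0d1 : (⟨0, by omega⟩ : Fin (p + 1 + (q + 1))) ≠ ⟨p + q + 1, by omega⟩ :=
    Fin.ne_of_val_ne (show (0:ℕ) ≠ p + q + 1 by omega)
  have h1d : (⟨1, by omega⟩ : Fin (p + 1 + (q + 1))) ≠ ⟨p + q, by omega⟩ :=
    Fin.ne_of_val_ne (show (1:ℕ) ≠ p + q by omega)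
  have h1d1 : (⟨1, by omega⟩ : Fin (p + 1 + (q + 1))) ≠ ⟨p + q + 1, by omega⟩ :=
    Fin.ne_of_val_ne (show (1:ℕ) ≠ p + q + 1 by omega)
  have hdd1 : (⟨p + q, by omega⟩ : Fin (p + 1 + (q + 1))) ≠ ⟨p + q + 1, by omega⟩ :=
    Fin.ne_of_val_ne (show (p + q : ℕ) ≠ p + q + 1 by omega)
  have hF1 : Fmat p q ⟨0, by omega⟩ ⟨p + q, by omega⟩ =
      fourB (⟨0, by omega⟩ : Fin (p + 1 + (q + 1))) ⟨p + q, by omega⟩ 0 (-1) (-1) 0 :=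
    Fmat_eq p q _ _ (show (0:ℕ) < p + 1 by omega) (show ¬((p + q : ℕ) < p + 1) by omega)
  have hF2 : Fmat p q ⟨1, by omega⟩ ⟨p + q + 1, by omega⟩ =
      fourB (⟨1, by omega⟩ : Fin (p + 1 + (q + 1))) ⟨p + q + 1, by omega⟩ 0 (-1) (-1) 0 :=
    Fmat_eq p q _ _ (show (1:ℕ) < p + 1 by omega) (show ¬((p + q + 1 : ℕ) < p + 1) by omega)
  have haF1 : a • Fmat p q ⟨0, by omega⟩ ⟨p + q, by omega⟩ =
      fourB (⟨0, by omega⟩ : Fin (p + 1 + (q + 1))) ⟨p + q, by omega⟩ 0 (-a) (-a) 0 := by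
    rw [hF1, smul_fourB]
    exact fourB_congr _ _ (by ring) (by ring) (by ring) (by ring)
  have haF2 : b • Fmat p q ⟨1, by omega⟩ ⟨p + q + 1, by omega⟩ =
      fourB (⟨1, by omega⟩ : Fin (p + 1 + (q + 1))) ⟨p + q + 1, by omega⟩ 0 (-b) (-b) 0 := by
    rw [hF2, smul_fourB]
    exact fourB_congr _ _ (by ring) (by ring) (by ring) (by ring)
  have hAB : fourB (⟨0, by omega⟩ : Fin (p + 1 + (q + 1))) ⟨p + q, by omega⟩ 0 (-a) (-a) 0 *
      fourB (⟨1, by omega⟩ : Fin (p + 1 + (q + 1))) ⟨p + q + 1, by omega⟩ 0 (-b) (-b) 0 = 0 :=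
    fourB_mul_fourB_disjoint h01 h0d1 h1d.symm hdd1 _ _ _ _ _ _ _ _
  have hBA : fourB (⟨1, by omega⟩ : Fin (p + 1 + (q + 1))) ⟨p + q + 1, by omega⟩ 0 (-b) (-b) 0 *
      fourB (⟨0, by omega⟩ : Fin (p + 1 + (q + 1))) ⟨p + q, by omega⟩ 0 (-a) (-a) 0 = 0 :=
    fourB_mul_fourB_disjoint h01.symm h1d h0d1.symm hdd1.symm _ _ _ _ _ _ _ _
  have hcomm : Commute
      (fourB (⟨0, by omega⟩ : Fin (p + 1 + (q + 1))) ⟨p + q, by omega⟩ 0 (-a) (-a) 0)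
      (fourB (⟨1, by omega⟩ : Fin (p + 1 + (q + 1))) ⟨p + q + 1, by omega⟩ 0 (-b) (-b) 0) :=
    commute_of_mul_eq_zero hAB hBA
  have hABc : fourB (⟨0, by omega⟩ : Fin (p + 1 + (q + 1))) ⟨p + q, by omega⟩
        (Real.cosh a - 1) (-Real.sinh a) (-Real.sinh a) (Real.cosh a - 1) *
      fourB (⟨1, by omega⟩ : Fin (p + 1 + (q + 1))) ⟨p + q + 1, by omega⟩
        (Real.cosh b - 1) (-Real.sinh b) (-Real.sinh b) (Real.cosh b - 1) = 0 :=
    fourB_mul_fourB_disjoint h01 h0d1 h1d.symm hdd1 _ _ _ _ _ _ _ _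
  have hxx : x = 1 +
      fourB (⟨0, by omega⟩ : Fin (p + 1 + (q + 1))) ⟨p + q, by omega⟩
        (Real.cosh a - 1) (-Real.sinh a) (-Real.sinh a) (Real.cosh a - 1) +
      fourB (⟨1, by omega⟩ : Fin (p + 1 + (q + 1))) ⟨p + q + 1, by omega⟩
        (Real.cosh b - 1) (-Real.sinh b) (-Real.sinh b) (Real.cosh b - 1) := by
    rw [hx, haF1, haF2, Matrix.exp_add_of_commute _ _ hcomm,
      exp_smul_fourF h0d a, exp_smul_fourF h1d1 b,
      add_mul, one_mul, mul_add, mul_one, hABc, add_zero]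
    abel
  have e00 : x ⟨0, by omega⟩ ⟨0, by omega⟩ = Real.cosh a := by
    rw [hxx, Matrix.add_apply, Matrix.add_apply, Matrix.one_apply_eq,
      fourB_apply_ii h0d, fourB_apply_row h01 h0d1]
    ring
  have e11 : x ⟨p + q + 1, by omega⟩ ⟨p + q + 1, by omega⟩ = Real.cosh b := by
    rw [hxx, Matrix.add_apply, Matrix.add_apply, Matrix.one_apply_eq,
      fourB_apply_jj h1d1, fourB_apply_row h0d1.symm hdd1.symm]
    ring
  have e01 : x ⟨0, by omega⟩ ⟨p + q + 1, by omega⟩ = 0 := by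
    rw [hxx, Matrix.add_apply, Matrix.add_apply, Matrix.one_apply_ne h0d1,
      fourB_apply_col h0d1.symm hdd1.symm, fourB_apply_row h01 h0d1]
    ring
  have e10 : x ⟨p + q + 1, by omega⟩ ⟨0, by omega⟩ = 0 := by
    rw [hxx, Matrix.add_apply, Matrix.add_apply, Matrix.one_apply_ne h0d1.symm,
      fourB_apply_row h0d1.symm hdd1.symm, fourB_apply_col h01 h0d1]
    ring
  refine ⟨e00, e11, e01, e10, ?_⟩
  intro hab hba
  rw [e00, e11, e01, e10]
  have hsu : Real.sinh ((a + b) / 2) ≠ 0 := by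
    rw [Real.sinh_ne_zero]
    intro h; exact hab (by linarith)
  have hsv : Real.sinh ((a - b) / 2) ≠ 0 := by
    rw [Real.sinh_ne_zero]
    intro h; exact hba (by linarith)
  have key1 := cosh_sub_cosh' a b
  have key2 := cosh_add_cosh' a b
  refine ⟨⟨by norm_num, ?_⟩, ⟨by norm_num, ?_⟩⟩
  · rw [key1]
    field_simp
    ring
  · rw [key1, key2]
    field_simp
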